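/- Let a₀, β₀, γ, c, d, e, Ω ∈ ℝ with a₀ ≠ 0, γ ≠ 0, Ω = −a₀γ, and suppose the number −(2c w*² + 4d w* + 4e)/γ is positive, where w* = −β₀/a₀, and set r* = √(−(2c w*² + 4d w* + 4e)/γ) > 0. Define f₁ : (0,∞) × ℝ → ℝ² by f₁(r,w) = ( π r (a₀ w + β₀) , (π/2)(γ r² + 2 c w² + 4 d w + 4 e) ). Then f₁(r*, w*) = (0,0), the Jacobian of f₁ at (r*, w*) equals [[0, π a₀ r*], [π γ r*, 2π(c w* + d)]], and its eigenvalues are η ± √(η² − π² Ω r*²), where η = π(a₀ d − c β₀)/a₀. In particular, if η² < π² Ω r*² the eigenvalues are a complex conjugate pair with real part η. -/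

import Mathlib

/-- With `a₀ ≠ 0`, `γ ≠ 0`, `Ω = -a₀γ`, `w* = -β₀/a₀` and
`r* = √(-(2c w*² + 4d w* + 4e)/γ) > 0`, the first-order Melnikov function
`f₁(r,w) = (πr(a₀w + β₀), (π/2)(γr² + 2cw² + 4dw + 4e))` vanishes at `(r*, w*)`,
its Jacobian there is `[[0, πa₀r*], [πγr*, 2π(cw* + d)]]`, whose eigenvalues `z` are
characterized by `(z - η)² = η² - π²Ωr*²` where `η = π(a₀d - cβ₀)/a₀`, i.e. they are
`η ± √(η² - π²Ωr*²)`.  In particular, if `η² < π²Ωr*²`, the eigenvalues are the complex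
conjugate pair `η ± i√(π²Ωr*² - η²)`, with real part `η`. -/
theorem stmt_6 (a₀ β₀ γ c d e Ω wstar rstar η : ℝ)
    (ha₀ : a₀ ≠ 0) (hγ : γ ≠ 0) (hΩ : Ω = -(a₀*γ))
    (hwstar : wstar = -β₀/a₀)
    (hpos : 0 < -(2*c*wstar^2 + 4*d*wstar + 4*e)/γ)
    (hrstar : rstar = Real.sqrt (-(2*c*wstar^2 + 4*d*wstar + 4*e)/γ))
    (hη : η = Real.pi*(a₀*d - c*β₀)/a₀)
    (f₁ : ℝ × ℝ → ℝ × ℝ)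
    (hf₁ : f₁ = fun p => (Real.pi * p.1 * (a₀*p.2 + β₀),
      Real.pi/2 * (γ*p.1^2 + 2*c*p.2^2 + 4*d*p.2 + 4*e))) :
    f₁ (rstar, wstar) = (0, 0) ∧
    HasFDerivAt f₁
      (((Real.pi*a₀*rstar) • ContinuousLinearMap.snd ℝ ℝ ℝ).prod
        ((Real.pi*γ*rstar) • ContinuousLinearMap.fst ℝ ℝ ℝ
          + (2*Real.pi*(c*wstar + d)) • ContinuousLinearMap.snd ℝ ℝ ℝ)) (rstar, wstar) ∧
    (∀ z : ℂ,
      Matrix.det (z • (1 : Matrix (Fin 2) (Fin 2) ℂ)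
          - !![0, ((Real.pi*a₀*rstar : ℝ) : ℂ);
               ((Real.pi*γ*rstar : ℝ) : ℂ), ((2*Real.pi*(c*wstar + d) : ℝ) : ℂ)]) = 0
        ↔ (z - (η : ℂ))^2 = ((η^2 - Real.pi^2*Ω*rstar^2 : ℝ) : ℂ)) ∧
    (η^2 < Real.pi^2*Ω*rstar^2 →
      ∀ z : ℂ,
        Matrix.det (z • (1 : Matrix (Fin 2) (Fin 2) ℂ)
            - !![0, ((Real.pi*a₀*rstar : ℝ) : ℂ);
                 ((Real.pi*γ*rstar : ℝ) : ℂ), ((2*Real.pi*(c*wstar + d) : ℝ) : ℂ)]) = 0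
          ↔ z = (η : ℂ) + Complex.I * ((Real.sqrt (Real.pi^2*Ω*rstar^2 - η^2) : ℝ) : ℂ)
            ∨ z = (η : ℂ) - Complex.I * ((Real.sqrt (Real.pi^2*Ω*rstar^2 - η^2) : ℝ) : ℂ)) := by
  have ha : a₀ * wstar + β₀ = 0 := by
    rw [hwstar]; field_simp; ring
  have hr2 : rstar ^ 2 = -(2*c*wstar^2 + 4*d*wstar + 4*e)/γ := by
    rw [hrstar, Real.sq_sqrt hpos.le]
  have hηT : 2 * Real.pi * (c * wstar + d) = 2 * η := by
    rw [hη, hwstar]; field_simp; ring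
  have hdet : ∀ z : ℂ,
      Matrix.det (z • (1 : Matrix (Fin 2) (Fin 2) ℂ)
          - !![0, ((Real.pi*a₀*rstar : ℝ) : ℂ);
               ((Real.pi*γ*rstar : ℝ) : ℂ), ((2*Real.pi*(c*wstar + d) : ℝ) : ℂ)])
        = (z - (η : ℂ))^2 - ((η^2 - Real.pi^2*Ω*rstar^2 : ℝ) : ℂ) := by
    intro z
    have h1 : (Real.pi*a₀*rstar) * (Real.pi*γ*rstar) = - (Real.pi^2*Ω*rstar^2) := by
      rw [hΩ]; ring
    have hc1 : (Real.pi:ℂ)*a₀*rstar*((Real.pi:ℂ)*γ*rstar) = -((Real.pi:ℂ)^2*Ω*rstar^2) := by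
      exact_mod_cast congrArg Complex.ofReal h1
    have hc2 : 2*(Real.pi:ℂ)*((c:ℂ)*(wstar:ℂ)+(d:ℂ)) = 2*(η:ℂ) := by
      exact_mod_cast congrArg Complex.ofReal hηT
    simp [Matrix.det_fin_two, Matrix.smul_apply, Matrix.one_apply]
    linear_combination (-z) * hc2 - hc1
  refine ⟨?_, ?_, ?_, ?_⟩
  · rw [hf₁]
    simp only [Prod.mk.injEq]
    have h0 : γ * rstar^2 + (2*c*wstar^2 + 4*d*wstar + 4*e) = 0 := by
      rw [hr2]; field_simp; ring
    refine ⟨by simp [ha], by linear_combination (Real.pi/2) * h0⟩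
  · subst hf₁
    simp only [sq]
    have h1 : HasFDerivAt (fun p : ℝ×ℝ => Real.pi * p.1 * (a₀*p.2 + β₀)) _ (rstar,wstar) :=
      ((hasFDerivAt_fst.const_mul Real.pi).mul
        (((hasFDerivAt_snd (𝕜 := ℝ)).const_mul a₀).add_const β₀))
    have h2 : HasFDerivAt (fun p : ℝ×ℝ =>
        Real.pi/2 * (γ*(p.1*p.1) + 2*c*(p.2*p.2) + 4*d*p.2 + 4*e)) _ (rstar,wstar) :=
      (((((hasFDerivAt_fst.mul hasFDerivAt_fst).const_mul γ).add
        ((hasFDerivAt_snd.mul (hasFDerivAt_snd (𝕜 := ℝ))).const_mul (2*c))).add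
          ((hasFDerivAt_snd (𝕜 := ℝ)).const_mul (4*d))).add_const (4*e)).const_mul (Real.pi/2)
    refine (HasFDerivAt.prodMk h1 h2).congr_fderiv ?_
    refine ContinuousLinearMap.ext fun p => Prod.ext ?_ ?_ <;>
      simp [ContinuousLinearMap.prod_apply, smul_eq_mul] <;>
      first
      | linear_combination (Real.pi * p.1) * ha
      | ring
  · intro z
    rw [hdet z, sub_eq_zero]
  · intro hlt z
    rw [hdet z, sub_eq_zero]
    have hK : 0 ≤ Real.pi^2*Ω*rstar^2 - η^2 := by linarith
    have hs : ((Real.sqrt (Real.pi^2*Ω*rstar^2 - η^2) : ℝ) : ℂ)^2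
        = ((Real.pi^2*Ω*rstar^2 - η^2 : ℝ) : ℂ) := by
      rw [← Complex.ofReal_pow, Real.sq_sqrt hK]
    set w : ℂ := Complex.I * ((Real.sqrt (Real.pi^2*Ω*rstar^2 - η^2) : ℝ) : ℂ) with hw
    have hw2 : w^2 = ((η^2 - Real.pi^2*Ω*rstar^2 : ℝ) : ℂ) := by
      rw [hw, mul_pow, Complex.I_sq, hs]; push_cast; ring
    constructor
    · intro h
      have hfac : (z - (η:ℂ) - w) * (z - (η:ℂ) + w) = 0 := by
        linear_combination h - hw2
      rcases mul_eq_zero.1 hfac with h' | h'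
      · left; linear_combination h'
      · right; linear_combination h'
    · rintro (h | h) <;> subst h <;> linear_combination hw2
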